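/- If the Stokes multipliers are s_{-2} = i(X_A - X_A X_B), s_{-1} = i(X_B^{-1} - X_A^{-1}X_B^{-1}), s₀ = iX_B, s₁ = i(X_A - X_A X_B^{-1} + X_B^{-1}), s₂ = iX_A^{-1}, for nonzero complex X_A, X_B, then the cyclic consistency conditions 1 + s_j s_{j-1} + i s_{j+2} = 0 hold for all j modulo 5. -/

import Mathlib

/- STATEMENT 14: With s_{-2} = i(X_A - X_A X_B), s_{-1} = i(X_B⁻¹ - X_A⁻¹X_B⁻¹),
s₀ = iX_B, s₁ = i(X_A - X_A X_B⁻¹ + X_B⁻¹), s₂ = iX_A⁻¹, for nonzero complex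
X_A, X_B, the cyclic consistency 1 + s_j s_{j-1} + i s_{j+2} = 0 holds for all
j mod 5. -/
theorem stokes_consistency_after (XA XB : ℂ) (hA : XA ≠ 0) (hB : XB ≠ 0)
    (s : ZMod 5 → ℂ)
    (hm2 : s (-2) = Complex.I * (XA - XA * XB))
    (hm1 : s (-1) = Complex.I * (XB⁻¹ - XA⁻¹ * XB⁻¹))
    (h0 : s 0 = Complex.I * XB)
    (h1 : s 1 = Complex.I * (XA - XA * XB⁻¹ + XB⁻¹))
    (h2 : s 2 = Complex.I * XA⁻¹) :
    ∀ j : ZMod 5, 1 + s j * s (j - 1) + Complex.I * s (j + 2) = 0 := by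
  rw [show (-2 : ZMod 5) = 3 from by decide] at hm2
  rw [show (-1 : ZMod 5) = 4 from by decide] at hm1
  have key : ∀ j : ZMod 5, j = 0 ∨ j = 1 ∨ j = 2 ∨ j = 3 ∨ j = 4 := by decide
  intro j
  rcases key j with rfl | rfl | rfl | rfl | rfl
  · rw [show (0:ZMod 5) - 1 = 4 from by decide, show (0:ZMod 5) + 2 = 2 from by decide,
      h0, hm1, h2]
    field_simp
    linear_combination XA * Complex.I_sq
  · rw [show (1:ZMod 5) - 1 = 0 from by decide, show (1:ZMod 5) + 2 = 3 from by decide,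
      h1, h0, hm2]
    field_simp
    linear_combination Complex.I_sq
  · rw [show (2:ZMod 5) - 1 = 1 from by decide, show (2:ZMod 5) + 2 = 4 from by decide,
      h2, h1, hm1]
    field_simp
    linear_combination XA * XB * Complex.I_sq
  · rw [show (3:ZMod 5) - 1 = 2 from by decide, show (3:ZMod 5) + 2 = 0 from by decide,
      hm2, h2, h0]
    field_simp
    linear_combination Complex.I_sq
  · rw [show (4:ZMod 5) - 1 = 3 from by decide, show (4:ZMod 5) + 2 = 1 from by decide,
      hm1, hm2, h1]
    field_simp
    linear_combination XB * Complex.I_sq
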